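/- Let α : ℕ → ℕ with α(n) ≥ 1, let 0 < δ < 1, and let n ∈ ℕ. Then for all w ∈ (1−δ, 1+δ) the function h̃_{n,α} is differentiable at w with h̃'_{n,α}(w) = ∑_{j=1}^{α(n)} x_{n,α}(w)^j/j − (1/2)·x'_{n,α}(w)/x_{n,α}(w) + (1/2)·x''_{n,α}(w)/x'_{n,α}(w) + 1/(2w), where x'_{n,α} and x''_{n,α} denote the first and second derivatives of w ↦ x_{n,α}(w). -/

import Mathlib

lemma stmt8_key (π A u w nn P1 P2 S0 : ℝ)
    (hu : 0 < u) (hw : 0 < w) (hP1 : 0 < P1) (hπ : 0 < π) (hnn0 : 0 < nn)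
    (hnn : nn = w * (u * S0)) :
    1 * A + w * (-(nn / w ^ 2) / P1 * S0) - nn * (u⁻¹ * (-(nn / w ^ 2) / P1))
      - 1 / 2 * ((2 * π * w * (u * P1))⁻¹ *
          (2 * π * 1 * (u * P1) + 2 * π * w * (-(nn / w ^ 2) / P1 * (u * P2 + P1))))
    = A - 1 / 2 * (-(nn / w ^ 2) / P1 / u)
      + 1 / 2 * ((2 * nn * w / (w ^ 2) ^ 2 * P1
          - -(nn / w ^ 2) * (P2 * (-(nn / w ^ 2) / P1))) / P1 ^ 2
          / (-(nn / w ^ 2) / P1))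
      + 1 / (2 * w) := by
  have hS0 : 0 < S0 := by
    rcases le_or_gt S0 0 with h | h
    · have h1 : u * S0 ≤ 0 := mul_nonpos_of_nonneg_of_nonpos hu.le h
      nlinarith
    · exact h
  subst hnn
  field_simp
  ring

open Real in
/-- first derivative of `h̃_{n,α}`.  With `x = x_{n,α}` the
saddle-point map and
`h̃(w) = w ∑_{j=1}^{α(n)} x(w)^j/j − n log x(w) − (1/2) log(2πw ∑_{j=1}^{α(n)} j x(w)^j)`,
for every `w ∈ (1−δ, 1+δ)` the function `h̃` is differentiable at `w` with
`h̃'(w) = ∑_{j=1}^{α(n)} x(w)^j/j − (1/2) x'(w)/x(w) + (1/2) x''(w)/x'(w) + 1/(2w)`. -/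
theorem stmt_8 (α : ℕ → ℕ) (hα : ∀ k, 1 ≤ α k) (δ : ℝ) (hδ0 : 0 < δ) (hδ1 : δ < 1)
    (n : ℕ)
    (x : ℝ → ℝ)
    (hx : ∀ w : ℝ, 0 < w →
      0 < x w ∧ ∑ j ∈ Finset.Icc 1 (α n), x w ^ j = (n : ℝ) / w)
    (h : ℝ → ℝ)
    (hh : ∀ w : ℝ, 0 < w →
      h w = w * ∑ j ∈ Finset.Icc 1 (α n), x w ^ j / j - (n : ℝ) * Real.log (x w)
        - 1 / 2 * Real.log (2 * π * w * ∑ j ∈ Finset.Icc 1 (α n), (j : ℝ) * x w ^ j)) :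
    ∀ w ∈ Set.Ioo (1 - δ) (1 + δ),
      HasDerivAt h
        (∑ j ∈ Finset.Icc 1 (α n), x w ^ j / j
          - 1 / 2 * (deriv x w / x w) + 1 / 2 * (deriv (deriv x) w / deriv x w)
          + 1 / (2 * w)) w := by
  intro w hw
  have hw0 : 0 < w := by
    have h1 := hw.1
    linarith
  obtain ⟨hxw, hpxw⟩ := hx w hw0
  have hm : 1 ≤ α n := hα n
  have h1m : 1 ∈ Finset.Icc 1 (α n) := Finset.mem_Icc.mpr ⟨le_refl 1, hm⟩
  have hn0 : 0 < (n : ℝ) := by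
    rcases Nat.eq_zero_or_pos n with h0 | h0
    · exfalso
      obtain ⟨hx1, hp1⟩ := hx 1 one_pos
      have hs : 0 < ∑ j ∈ Finset.Icc 1 (α n), x 1 ^ j :=
        Finset.sum_pos (fun j _ => pow_pos hx1 j) ⟨1, h1m⟩
      rw [hp1, h0] at hs
      norm_num at hs
    · exact_mod_cast h0
  set p : ℝ → ℝ := fun y => ∑ j ∈ Finset.Icc 1 (α n), y ^ j with hpdef
  set p1 : ℝ → ℝ := fun y => ∑ j ∈ Finset.Icc 1 (α n), (j : ℝ) * y ^ (j - 1) with hp1def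
  set p2 : ℝ → ℝ := fun y => ∑ j ∈ Finset.Icc 1 (α n), (j : ℝ) * ((j : ℝ) - 1) * y ^ (j - 2)
    with hp2def
  have hpx : p (x w) = (n : ℝ) / w := hpxw
  have hppos : ∀ y : ℝ, 0 < y → 0 < p y := fun y hy =>
    Finset.sum_pos (fun j _ => pow_pos hy j) ⟨1, h1m⟩
  have hp0 : p 0 = 0 := Finset.sum_eq_zero fun j hj => zero_pow (by
    have := (Finset.mem_Icc.mp hj).1; omega)
  have hp1pos : ∀ y : ℝ, 0 < y → 0 < p1 y := by
    intro y hy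
    refine Finset.sum_pos' (fun j _ => by positivity) ⟨1, h1m, ?_⟩
    norm_num
  have hpc : Continuous p := continuous_finset_sum _ fun j _ => continuous_pow j
  have hpd : ∀ y : ℝ, HasDerivAt p (p1 y) y := fun y =>
    HasDerivAt.fun_sum fun j _ => hasDerivAt_pow j y
  have hp1d : ∀ y : ℝ, HasDerivAt p1 (p2 y) y := by
    intro y
    refine HasDerivAt.fun_sum fun j hj => ?_
    have hj1 : 1 ≤ j := (Finset.mem_Icc.mp hj).1
    have hd := (hasDerivAt_pow (j - 1) y).const_mul (j : ℝ)
    convert hd using 1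
    · rfl
    have h2 : j - 1 - 1 = j - 2 := by omega
    rw [h2, Nat.cast_sub hj1]
    push_cast
    ring
  -- monotone extension of `p`
  set P : ℝ → ℝ := fun y => if y ≤ 0 then y else p y with hPdef
  have hPeq : ∀ y : ℝ, 0 < y → P y = p y := fun y hy => if_neg (not_le.mpr hy)
  have hPmono : StrictMono P := by
    intro a b hab
    simp only [hPdef]
    by_cases hb : b ≤ 0
    · rw [if_pos (hab.le.trans hb), if_pos hb]
      exact hab
    · push_neg at hb
      rw [if_neg (not_le.mpr hb)]
      by_cases ha : a ≤ 0
      · rw [if_pos ha]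
        exact lt_of_le_of_lt ha (hppos b hb)
      · push_neg at ha
        rw [if_neg (not_le.mpr ha)]
        refine Finset.sum_lt_sum (fun j _ => pow_le_pow_left₀ ha.le hab.le j) ⟨1, h1m, ?_⟩
        simpa using hab
  have hPsurj : Function.Surjective P := by
    intro z
    rcases le_or_gt z 0 with hz | hz
    · exact ⟨z, if_pos hz⟩
    · have hz2 : z ∈ Set.Icc (p 0) (p z) := by
        constructor
        · rw [hp0]; exact hz.le
        · have h1 : z ^ 1 ≤ p z :=
            Finset.single_le_sum (f := fun j => z ^ j) (fun j _ => pow_nonneg hz.le j) h1m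
          simpa using h1
      obtain ⟨y, hy, hyz⟩ := intermediate_value_Icc hz.le hpc.continuousOn hz2
      have hy0 : 0 < y := hy.1.lt_of_ne (by
        rintro rfl
        rw [hp0] at hyz
        linarith)
      exact ⟨y, (hPeq y hy0).trans hyz⟩
  have hPcont : Continuous P := by
    rw [hPdef]
    refine Continuous.if_le continuous_id hpc continuous_id continuous_const ?_
    intro a ha
    rw [ha, hp0]
  set G := StrictMono.orderIsoOfSurjective P hPmono hPsurj with hGdef
  have hGcont : Continuous (⇑G.symm) := G.symm.continuous
  -- differentiability of the saddle-point map
  have hxd : ∀ s : ℝ, 0 < s → HasDerivAt x (-((n : ℝ) / s ^ 2) / p1 (x s)) s := by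
    intro s hs
    obtain ⟨hxs, hps⟩ := hx s hs
    have hpxs : p (x s) = (n : ℝ) / s := hps
    have hPxs : P (x s) = (n : ℝ) / s := by rw [hPeq _ hxs]; exact hpxs
    have hp1s : 0 < p1 (x s) := hp1pos _ hxs
    have hGs : G.symm ((n : ℝ) / s) = x s := by
      rw [← hPxs]
      exact G.symm_apply_apply (x s)
    have hPd : HasDerivAt P (p1 (x s)) (x s) := by
      refine (hpd (x s)).congr_of_eventuallyEq ?_
      filter_upwards [Ioi_mem_nhds hxs] with y hy
      exact hPeq y hy
    have hinv : HasDerivAt (⇑G.symm) (p1 (x s))⁻¹ ((n : ℝ) / s) := by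
      refine HasDerivAt.of_local_left_inverse (f := P) hGcont.continuousAt ?_ (ne_of_gt hp1s) ?_
      · rw [hGs]; exact hPd
      · exact Filter.Eventually.of_forall fun y => G.apply_symm_apply y
    have hq : HasDerivAt (fun t : ℝ => (n : ℝ) / t) (-((n : ℝ) / s ^ 2)) s := by
      have h2 := (hasDerivAt_inv (ne_of_gt hs)).const_mul (n : ℝ)
      have h3 : (fun t : ℝ => (n : ℝ) / t) = fun t : ℝ => (n : ℝ) * t⁻¹ := by
        funext t; rw [div_eq_mul_inv]
      rw [h3]
      convert h2 using 1
      · rfl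
      · rfl
      ring
    have hcomp := hinv.comp s hq
    have hxeq : HasDerivAt x ((p1 (x s))⁻¹ * -((n : ℝ) / s ^ 2)) s := by
      refine hcomp.congr_of_eventuallyEq ?_
      filter_upwards [Ioi_mem_nhds hs] with t ht
      obtain ⟨hxt, hpt⟩ := hx t ht
      have hPt : P (x t) = (n : ℝ) / t := by rw [hPeq _ hxt]; exact hpt
      show x t = G.symm ((n : ℝ) / t)
      rw [← hPt]
      exact (G.symm_apply_apply (x t)).symm
    convert hxeq using 1
    ring
  have hdx : ∀ s : ℝ, 0 < s → deriv x s = -((n : ℝ) / s ^ 2) / p1 (x s) := fun s hs =>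
    (hxd s hs).deriv
  -- second derivative
  have hx2d : ∀ s : ℝ, 0 < s → HasDerivAt (fun t => -((n : ℝ) / t ^ 2) / p1 (x t))
      ((2 * (n : ℝ) * s / (s ^ 2) ^ 2 * p1 (x s)
        - -((n : ℝ) / s ^ 2) * (p2 (x s) * (-((n : ℝ) / s ^ 2) / p1 (x s))))
        / p1 (x s) ^ 2) s := by
    intro s hs
    obtain ⟨hxs, _⟩ := hx s hs
    have hp1s : 0 < p1 (x s) := hp1pos _ hxs
    have hden : HasDerivAt (fun t => p1 (x t))
        (p2 (x s) * (-((n : ℝ) / s ^ 2) / p1 (x s))) s :=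
      (hp1d (x s)).comp s (hxd s hs)
    have hcnum : HasDerivAt (fun t : ℝ => -((n : ℝ) / t ^ 2))
        (2 * (n : ℝ) * s / (s ^ 2) ^ 2) s := by
      have hb := (((hasDerivAt_pow 2 s).inv (pow_ne_zero 2 (ne_of_gt hs))).const_mul (n : ℝ)).neg
      have h3 : (fun t : ℝ => -((n : ℝ) / t ^ 2)) = fun t : ℝ => -((n : ℝ) * (t ^ 2)⁻¹) := by
        funext t; rw [div_eq_mul_inv]
      rw [h3]
      convert hb using 1
      · rfl
      · rfl
      have hs' : s ≠ 0 := ne_of_gt hs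
      · funext t; simp [inv_pow]
      simp only [Nat.cast_ofNat, show (2:ℕ) - 1 = 1 from rfl, pow_one]
      ring
    exact hcnum.div hden (ne_of_gt hp1s)
  have hddx : deriv (deriv x) w =
      (2 * (n : ℝ) * w / (w ^ 2) ^ 2 * p1 (x w)
        - -((n : ℝ) / w ^ 2) * (p2 (x w) * (-((n : ℝ) / w ^ 2) / p1 (x w))))
        / p1 (x w) ^ 2 := by
    have heq : deriv x =ᶠ[nhds w] fun t => -((n : ℝ) / t ^ 2) / p1 (x t) := by
      filter_upwards [Ioi_mem_nhds hw0] with t ht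
      exact hdx t ht
    rw [heq.deriv_eq]
    exact (hx2d w hw0).deriv
  -- derivative of h
  have hx1 := hxd w hw0
  have hp1w : 0 < p1 (x w) := hp1pos _ hxw
  have hA : HasDerivAt (fun t => ∑ j ∈ Finset.Icc 1 (α n), x t ^ j / j)
      (∑ j ∈ Finset.Icc 1 (α n),
        (j : ℝ) * x w ^ (j - 1) * (-((n : ℝ) / w ^ 2) / p1 (x w)) / (j : ℝ)) w :=
    HasDerivAt.fun_sum fun j _ => ((hasDerivAt_pow j (x w)).comp w hx1).div_const (j : ℝ)
  have hB : HasDerivAt (fun t => ∑ j ∈ Finset.Icc 1 (α n), (j : ℝ) * x t ^ j)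
      (∑ j ∈ Finset.Icc 1 (α n),
        (j : ℝ) * ((j : ℝ) * x w ^ (j - 1) * (-((n : ℝ) / w ^ 2) / p1 (x w)))) w :=
    HasDerivAt.fun_sum fun j _ => ((hasDerivAt_pow j (x w)).comp w hx1).const_mul (j : ℝ)
  have hBpos : 0 < ∑ j ∈ Finset.Icc 1 (α n), (j : ℝ) * x w ^ j := by
    refine Finset.sum_pos' (fun j _ => by positivity) ⟨1, h1m, ?_⟩
    simpa using hxw
  have hπpos : 0 < π := Real.pi_pos
  have hlogx : HasDerivAt (fun t => (n : ℝ) * Real.log (x t))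
      ((n : ℝ) * ((x w)⁻¹ * (-((n : ℝ) / w ^ 2) / p1 (x w)))) w :=
    ((Real.hasDerivAt_log (ne_of_gt hxw)).comp w hx1).const_mul (n : ℝ)
  have h2pi : HasDerivAt (fun t : ℝ => 2 * π * t) (2 * π * 1) w :=
    (hasDerivAt_id w).const_mul (2 * π)
  have hinner : HasDerivAt
      (fun t => 2 * π * t * ∑ j ∈ Finset.Icc 1 (α n), (j : ℝ) * x t ^ j)
      (2 * π * 1 * (∑ j ∈ Finset.Icc 1 (α n), (j : ℝ) * x w ^ j)
        + 2 * π * w * ∑ j ∈ Finset.Icc 1 (α n),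
            (j : ℝ) * ((j : ℝ) * x w ^ (j - 1) * (-((n : ℝ) / w ^ 2) / p1 (x w)))) w :=
    h2pi.mul hB
  have hinnerpos : 0 < 2 * π * w * ∑ j ∈ Finset.Icc 1 (α n), (j : ℝ) * x w ^ j :=
    mul_pos (mul_pos (mul_pos two_pos hπpos) hw0) hBpos
  have hlog2 : HasDerivAt
      (fun t => Real.log (2 * π * t * ∑ j ∈ Finset.Icc 1 (α n), (j : ℝ) * x t ^ j))
      ((2 * π * w * ∑ j ∈ Finset.Icc 1 (α n), (j : ℝ) * x w ^ j)⁻¹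
        * (2 * π * 1 * (∑ j ∈ Finset.Icc 1 (α n), (j : ℝ) * x w ^ j)
          + 2 * π * w * ∑ j ∈ Finset.Icc 1 (α n),
              (j : ℝ) * ((j : ℝ) * x w ^ (j - 1) * (-((n : ℝ) / w ^ 2) / p1 (x w))))) w :=
    by have := (Real.hasDerivAt_log (ne_of_gt hinnerpos)).comp w hinner; exact this
  have hHD : HasDerivAt
      (fun t => t * ∑ j ∈ Finset.Icc 1 (α n), x t ^ j / j - (n : ℝ) * Real.log (x t)
        - 1 / 2 * Real.log (2 * π * t * ∑ j ∈ Finset.Icc 1 (α n), (j : ℝ) * x t ^ j))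
      (1 * (∑ j ∈ Finset.Icc 1 (α n), x w ^ j / j)
        + w * ∑ j ∈ Finset.Icc 1 (α n),
            (j : ℝ) * x w ^ (j - 1) * (-((n : ℝ) / w ^ 2) / p1 (x w)) / (j : ℝ)
        - (n : ℝ) * ((x w)⁻¹ * (-((n : ℝ) / w ^ 2) / p1 (x w)))
        - 1 / 2 * ((2 * π * w * ∑ j ∈ Finset.Icc 1 (α n), (j : ℝ) * x w ^ j)⁻¹
            * (2 * π * 1 * (∑ j ∈ Finset.Icc 1 (α n), (j : ℝ) * x w ^ j)
              + 2 * π * w * ∑ j ∈ Finset.Icc 1 (α n),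
                  (j : ℝ) * ((j : ℝ) * x w ^ (j - 1) * (-((n : ℝ) / w ^ 2) / p1 (x w)))))) w :=
    (((hasDerivAt_id w).mul hA).sub hlogx).sub (hlog2.const_mul (1 / 2 : ℝ))
  have hfinal := hHD.congr_of_eventuallyEq (by
    filter_upwards [Ioi_mem_nhds hw0] with t ht
    exact hh t ht)
  -- rewrite the claimed derivative
  rw [hdx w hw0, hddx]
  -- sum manipulations
  have E1 : ∑ j ∈ Finset.Icc 1 (α n),
      (j : ℝ) * x w ^ (j - 1) * (-((n : ℝ) / w ^ 2) / p1 (x w)) / (j : ℝ)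
      = -((n : ℝ) / w ^ 2) / p1 (x w) * ∑ j ∈ Finset.Icc 1 (α n), x w ^ (j - 1) := by
    rw [Finset.mul_sum]
    refine Finset.sum_congr rfl fun j hj => ?_
    have hj1 : 1 ≤ j := (Finset.mem_Icc.mp hj).1
    have hjne : (j : ℝ) ≠ 0 := Nat.cast_ne_zero.mpr (by omega)
    field_simp
  have E3 : ∑ j ∈ Finset.Icc 1 (α n), (j : ℝ) * x w ^ j = x w * p1 (x w) := by
    simp only [hp1def, Finset.mul_sum]
    refine Finset.sum_congr rfl fun j hj => ?_
    have hj1 : 1 ≤ j := (Finset.mem_Icc.mp hj).1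
    have hpow : x w ^ j = x w * x w ^ (j - 1) := by
      conv_lhs => rw [show j = j - 1 + 1 by omega]
      rw [pow_succ']
    rw [hpow]
    ring
  have E4 : ∑ j ∈ Finset.Icc 1 (α n),
      (j : ℝ) * ((j : ℝ) * x w ^ (j - 1) * (-((n : ℝ) / w ^ 2) / p1 (x w)))
      = -((n : ℝ) / w ^ 2) / p1 (x w) * (x w * p2 (x w) + p1 (x w)) := by
    have e5 : x w * p2 (x w) + p1 (x w)
        = ∑ j ∈ Finset.Icc 1 (α n), (j : ℝ) ^ 2 * x w ^ (j - 1) := by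
      simp only [hp2def, hp1def, Finset.mul_sum, ← Finset.sum_add_distrib]
      refine Finset.sum_congr rfl fun j hj => ?_
      have hj1 : 1 ≤ j := (Finset.mem_Icc.mp hj).1
      rcases eq_or_lt_of_le hj1 with h1 | h2
      · rw [← h1]; norm_num
      · have hpow : x w ^ (j - 1) = x w * x w ^ (j - 2) := by
          conv_lhs => rw [show j - 1 = j - 2 + 1 by omega]
          rw [pow_succ']
        rw [hpow]
        ring
    rw [e5, Finset.mul_sum]
    exact Finset.sum_congr rfl fun j hj => by ring
  have hnrel : (n : ℝ) = w * (x w * ∑ j ∈ Finset.Icc 1 (α n), x w ^ (j - 1)) := by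
    have E2 : x w * ∑ j ∈ Finset.Icc 1 (α n), x w ^ (j - 1) = p (x w) := by
      simp only [hpdef, Finset.mul_sum]
      refine Finset.sum_congr rfl fun j hj => ?_
      have hj1 : 1 ≤ j := (Finset.mem_Icc.mp hj).1
      have hpow : x w ^ j = x w * x w ^ (j - 1) := by
        conv_lhs => rw [show j = j - 1 + 1 by omega]
        rw [pow_succ']
      rw [hpow]
    rw [E2, hpx]
    field_simp
  have hkey : ∑ j ∈ Finset.Icc 1 (α n), x w ^ j / j
      - 1 / 2 * (-((n : ℝ) / w ^ 2) / p1 (x w) / x w)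
      + 1 / 2 * ((2 * (n : ℝ) * w / (w ^ 2) ^ 2 * p1 (x w)
          - -((n : ℝ) / w ^ 2) * (p2 (x w) * (-((n : ℝ) / w ^ 2) / p1 (x w))))
          / p1 (x w) ^ 2 / (-((n : ℝ) / w ^ 2) / p1 (x w)))
      + 1 / (2 * w)
      = 1 * (∑ j ∈ Finset.Icc 1 (α n), x w ^ j / j)
        + w * ∑ j ∈ Finset.Icc 1 (α n),
            (j : ℝ) * x w ^ (j - 1) * (-((n : ℝ) / w ^ 2) / p1 (x w)) / (j : ℝ)
        - (n : ℝ) * ((x w)⁻¹ * (-((n : ℝ) / w ^ 2) / p1 (x w)))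
        - 1 / 2 * ((2 * π * w * ∑ j ∈ Finset.Icc 1 (α n), (j : ℝ) * x w ^ j)⁻¹
            * (2 * π * 1 * (∑ j ∈ Finset.Icc 1 (α n), (j : ℝ) * x w ^ j)
              + 2 * π * w * ∑ j ∈ Finset.Icc 1 (α n),
                  (j : ℝ) * ((j : ℝ) * x w ^ (j - 1) * (-((n : ℝ) / w ^ 2) / p1 (x w))))) := by
    rw [E1, E3, E4]
    exact (stmt8_key π (∑ j ∈ Finset.Icc 1 (α n), x w ^ j / j) (x w) w (n : ℝ)
      (p1 (x w)) (p2 (x w)) (∑ j ∈ Finset.Icc 1 (α n), x w ^ (j - 1))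
      hxw hw0 hp1w hπpos hn0 hnrel).symm
  rw [hkey]
  exact hfinal
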